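/- Let (Ω, ℱ, P) be a probability space, m₀ a positive integer, M : Ω → {1, …, m₀} a random variable (the cluster size), and N₁, …, N_{m₀} integrable real-valued random variables on Ω such that for every m ∈ {1, …, m₀}, E[N_m ∣ σ(M)] = E[N₁ ∣ σ(M)] almost surely (conditional exchangeability given cluster size). Then E[M^{-1} ∑_{m=1}^{M} N_m] = E[N₁]. -/
import Mathlib


open MeasureTheory

/-- For clustered data with conditionally exchangeable (given the cluster size `M`)
integrable variables `N 1, …, N m₀`, the expectation of the within-cluster average
`M⁻¹ ∑_{m=1}^{M} N m` equals `E[N 1]`. -/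
theorem cluster_average_eq_member_mean
    {Ω : Type*} [MeasurableSpace Ω] (P : Measure Ω) [IsProbabilityMeasure P]
    (m₀ : ℕ) (hm₀ : 0 < m₀)
    (M : Ω → ℕ) (hM : Measurable M)
    (hM_range : ∀ ω, M ω ∈ Finset.Icc 1 m₀)
    (N : ℕ → Ω → ℝ)
    (hN_int : ∀ m ∈ Finset.Icc 1 m₀, Integrable (N m) P)
    (h_exch : ∀ m ∈ Finset.Icc 1 m₀,
      P[N m | MeasurableSpace.comap M inferInstance]
        =ᵐ[P] P[N 1 | MeasurableSpace.comap M inferInstance]) :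
    ∫ ω, (M ω : ℝ)⁻¹ * (∑ m ∈ Finset.Icc 1 m₀, if m ≤ M ω then N m ω else 0) ∂P
      = ∫ ω, N 1 ω ∂P := by
  have hGle : MeasurableSpace.comap M inferInstance ≤ ‹MeasurableSpace Ω› := hM.comap_le
  have hAmeas : ∀ k : ℕ, MeasurableSet (M ⁻¹' {k}) := fun k => hM (measurableSet_singleton k)
  have hAG : ∀ k : ℕ, MeasurableSet[MeasurableSpace.comap M inferInstance] (M ⁻¹' {k}) :=
    fun k => ⟨{k}, measurableSet_singleton k, rfl⟩
  have h1 : (1 : ℕ) ∈ Finset.Icc 1 m₀ := Finset.mem_Icc.mpr ⟨le_refl 1, hm₀⟩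
  -- key: set integrals over {M = k} agree
  have hkey : ∀ (k : ℕ), ∀ m ∈ Finset.Icc 1 m₀,
      ∫ ω in M ⁻¹' {k}, N m ω ∂P = ∫ ω in M ⁻¹' {k}, N 1 ω ∂P := by
    intro k m hm
    rw [← setIntegral_condExp hGle (hN_int m hm) (hAG k),
        ← setIntegral_condExp hGle (hN_int 1 h1) (hAG k)]
    exact integral_congr_ae (ae_restrict_of_ae (h_exch m hm))
  -- integrability of pieces
  have hint : ∀ k ∈ Finset.Icc 1 m₀,
      Integrable (fun ω => if M ω = k then (k : ℝ)⁻¹ * ∑ m ∈ Finset.Icc 1 k, N m ω else 0) P := by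
    intro k hk
    have : Integrable (fun ω => (k : ℝ)⁻¹ * ∑ m ∈ Finset.Icc 1 k, N m ω) P := by
      refine (integrable_finset_sum _ fun m hm => hN_int m ?_).const_mul _
      simp only [Finset.mem_Icc] at hk hm ⊢
      omega
    have h := this.indicator (hAmeas k)
    refine h.congr (Filter.Eventually.of_forall fun ω => ?_)
    by_cases hω : M ω = k <;> simp [Set.indicator_apply, Set.mem_preimage, hω]
  have hintN1 : ∀ k ∈ Finset.Icc 1 m₀,
      Integrable (fun ω => if M ω = k then N 1 ω else 0) P := by
    intro k _
    have h := (hN_int 1 h1).indicator (hAmeas k)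
    refine h.congr (Filter.Eventually.of_forall fun ω => ?_)
    by_cases hω : M ω = k <;> simp [Set.indicator_apply, Set.mem_preimage, hω]
  -- pointwise decomposition of LHS integrand
  have hf : ∀ ω, (M ω : ℝ)⁻¹ * (∑ m ∈ Finset.Icc 1 m₀, if m ≤ M ω then N m ω else 0)
      = ∑ k ∈ Finset.Icc 1 m₀, if M ω = k then (k : ℝ)⁻¹ * ∑ m ∈ Finset.Icc 1 k, N m ω else 0 := by
    intro ω
    rw [Finset.sum_ite_eq (Finset.Icc 1 m₀) (M ω), if_pos (hM_range ω)]
    congr 1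
    have hsub : (Finset.Icc 1 m₀).filter (fun m => m ≤ M ω) = Finset.Icc 1 (M ω) := by
      have := hM_range ω
      simp only [Finset.mem_Icc] at this
      ext x
      simp only [Finset.mem_filter, Finset.mem_Icc]
      omega
    rw [← Finset.sum_filter, hsub]
  -- pointwise decomposition of RHS integrand
  have hg : ∀ ω, N 1 ω = ∑ k ∈ Finset.Icc 1 m₀, if M ω = k then N 1 ω else 0 := by
    intro ω
    rw [Finset.sum_ite_eq (Finset.Icc 1 m₀) (M ω), if_pos (hM_range ω)]
  calc ∫ ω, (M ω : ℝ)⁻¹ * (∑ m ∈ Finset.Icc 1 m₀, if m ≤ M ω then N m ω else 0) ∂P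
      = ∫ ω, ∑ k ∈ Finset.Icc 1 m₀,
          (if M ω = k then (k : ℝ)⁻¹ * ∑ m ∈ Finset.Icc 1 k, N m ω else 0) ∂P := by
        exact integral_congr_ae (Filter.Eventually.of_forall hf)
    _ = ∑ k ∈ Finset.Icc 1 m₀, ∫ ω,
          (if M ω = k then (k : ℝ)⁻¹ * ∑ m ∈ Finset.Icc 1 k, N m ω else 0) ∂P := by
        exact integral_finset_sum _ hint
    _ = ∑ k ∈ Finset.Icc 1 m₀, ∫ ω, (if M ω = k then N 1 ω else 0) ∂P := by
        refine Finset.sum_congr rfl fun k hk => ?_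
        have hik : ∀ ω, (if M ω = k then (k : ℝ)⁻¹ * ∑ m ∈ Finset.Icc 1 k, N m ω else 0)
            = Set.indicator (M ⁻¹' {k}) (fun ω => (k : ℝ)⁻¹ * ∑ m ∈ Finset.Icc 1 k, N m ω) ω := by
          intro ω; by_cases hω : M ω = k <;> simp [Set.indicator_apply, Set.mem_preimage, hω]
        have hik1 : ∀ ω, (if M ω = k then N 1 ω else 0)
            = Set.indicator (M ⁻¹' {k}) (N 1) ω := by
          intro ω; by_cases hω : M ω = k <;> simp [Set.indicator_apply, Set.mem_preimage, hω]
        simp only [hik, hik1]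
        rw [integral_indicator (hAmeas k), integral_indicator (hAmeas k)]
        rw [MeasureTheory.integral_const_mul]
        have hrest : ∀ m ∈ Finset.Icc 1 k, Integrable (N m) (P.restrict (M ⁻¹' {k})) := by
          intro m hm
          refine (hN_int m ?_).restrict
          simp only [Finset.mem_Icc] at hk hm ⊢
          omega
        rw [integral_finset_sum _ hrest]
        have heq : ∀ m ∈ Finset.Icc 1 k,
            ∫ ω in M ⁻¹' {k}, N m ω ∂P = ∫ ω in M ⁻¹' {k}, N 1 ω ∂P := by
          intro m hm
          refine hkey k m ?_
          simp only [Finset.mem_Icc] at hk hm ⊢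
          omega
        rw [Finset.sum_congr rfl heq, Finset.sum_const, Nat.card_Icc, nsmul_eq_mul]
        simp only [Finset.mem_Icc] at hk
        have hk' : k + 1 - 1 = k := by omega
        have hk0 : (k : ℝ) ≠ 0 := Nat.cast_ne_zero.mpr (by omega)
        rw [hk']
        field_simp
    _ = ∫ ω, N 1 ω ∂P := by
        rw [← integral_finset_sum _ hintN1]
        exact integral_congr_ae (Filter.Eventually.of_forall fun ω => (hg ω).symm)
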